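/- The function ε_0(a) = [G(2√a) − G(0)]/√a is strictly decreasing in a for a > 0, where G(x) = x·Q(x) − (1/√(2π))e^{−x²/2}. -/

import Mathlib

/-- The standard normal tail function `Q(x) = P(N(0,1) ≥ x)`. -/
noncomputable def gaussQ (x : ℝ) : ℝ :=
  ∫ t in Set.Ioi x, Real.exp (-t ^ 2 / 2) / Real.sqrt (2 * Real.pi)

/-- `G(x) = x Q(x) − φ(x)`, an antiderivative of `Q`. -/
noncomputable def gaussG (x : ℝ) : ℝ :=
  x * gaussQ x - Real.exp (-x ^ 2 / 2) / Real.sqrt (2 * Real.pi)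

open Real MeasureTheory intervalIntegral Set

noncomputable def gphi (t : ℝ) : ℝ := Real.exp (-t ^ 2 / 2) / Real.sqrt (2 * Real.pi)

lemma gphi_cont : Continuous gphi := by unfold gphi; continuity

lemma gphi_pos (t : ℝ) : 0 < gphi t := by
  unfold gphi
  have : 0 < Real.sqrt (2 * Real.pi) := Real.sqrt_pos.2 (by positivity)
  positivity

lemma gphi_integrable : Integrable gphi := by
  have h : Integrable (fun t : ℝ => Real.exp (-(1/2 : ℝ) * t ^ 2)) :=
    integrable_exp_neg_mul_sq (by norm_num)
  have h2 := h.div_const (Real.sqrt (2 * Real.pi))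
  have : gphi = fun t : ℝ => Real.exp (-(1/2 : ℝ) * t ^ 2) / Real.sqrt (2 * Real.pi) := by
    funext t; unfold gphi; ring_nf
  rw [this]; exact h2

lemma gaussQ_eq (x : ℝ) : gaussQ x = ∫ t in Set.Ioi x, gphi t := rfl

lemma gaussQ_sub (s t : ℝ) (h : s ≤ t) :
    gaussQ s - gaussQ t = ∫ u in s..t, gphi u := by
  rw [intervalIntegral.integral_of_le h, gaussQ_eq, gaussQ_eq]
  have hsplit : (Set.Ioi s) = Set.Ioc s t ∪ Set.Ioi t := (Set.Ioc_union_Ioi_eq_Ioi h).symm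
  rw [hsplit, MeasureTheory.setIntegral_union (Set.Ioc_disjoint_Ioi le_rfl)
    measurableSet_Ioi (gphi_integrable.integrableOn) (gphi_integrable.integrableOn)]
  ring

lemma gaussQ_strictAnti : StrictAnti gaussQ := by
  intro s t hst
  have h := gaussQ_sub s t hst.le
  have hpos : 0 < ∫ u in s..t, gphi u :=
    intervalIntegral.intervalIntegral_pos_of_pos_on
      (gphi_cont.intervalIntegrable s t) (fun x _ => gphi_pos x) hst
  linarith

lemma gaussQ_eq_primitive (x : ℝ) : gaussQ x = gaussQ 0 - ∫ u in (0:ℝ)..x, gphi u := by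
  rcases le_total 0 x with h | h
  · have := gaussQ_sub 0 x h; linarith
  · have := gaussQ_sub x 0 h
    rw [intervalIntegral.integral_symm] at this
    linarith

lemma gaussQ_hasDerivAt (x : ℝ) : HasDerivAt gaussQ (-gphi x) x := by
  have hF : HasDerivAt (fun u => ∫ u in (0:ℝ)..u, gphi u) (gphi x) x :=
    intervalIntegral.integral_hasDerivAt_right (gphi_cont.intervalIntegrable 0 x)
      (gphi_cont.stronglyMeasurable.stronglyMeasurableAtFilter) gphi_cont.continuousAt
  have : HasDerivAt (fun u => gaussQ 0 - ∫ v in (0:ℝ)..u, gphi v) (-gphi x) x :=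
    (hasDerivAt_const x (gaussQ 0)).sub hF |>.congr_deriv (by ring)
  exact this.congr_of_eventuallyEq (Filter.Eventually.of_forall fun u => gaussQ_eq_primitive u)

lemma gaussQ_continuous : Continuous gaussQ := by
  have : Continuous (fun u => gaussQ 0 - ∫ v in (0:ℝ)..u, gphi v) :=
    continuous_const.sub (intervalIntegral.continuous_primitive
      (fun a b => gphi_cont.intervalIntegrable a b) 0)
  exact this.congr (fun u => (gaussQ_eq_primitive u).symm)

lemma gphi_hasDerivAt (x : ℝ) : HasDerivAt gphi (-x * gphi x) x := by
  have h1 : HasDerivAt (fun u : ℝ => -u ^ 2 / 2) (-x) x := by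
    have := ((hasDerivAt_pow 2 x).neg.div_const 2)
    exact this.congr_deriv (by push_cast; ring)
  have := (h1.exp).div_const (Real.sqrt (2 * Real.pi))
  have h2 : HasDerivAt gphi (Real.exp (-x ^ 2 / 2) * (-x) / Real.sqrt (2 * Real.pi)) x := this
  convert h2 using 1; unfold gphi; ring

lemma gaussG_hasDerivAt (x : ℝ) : HasDerivAt gaussG (gaussQ x) x := by
  have h1 : HasDerivAt (fun u => u * gaussQ u) (1 * gaussQ x + x * (-gphi x)) x :=
    (hasDerivAt_id x).mul (gaussQ_hasDerivAt x)
  have h2 := h1.sub (gphi_hasDerivAt x)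
  have : HasDerivAt (fun u => u * gaussQ u - gphi u) (gaussQ x) x := by
    exact h2.congr_deriv (by ring)
  exact this

lemma gaussG_sub (s t : ℝ) (h : s ≤ t) :
    gaussG t - gaussG s = ∫ u in s..t, gaussQ u :=
  (intervalIntegral.integral_eq_sub_of_hasDerivAt (fun x _ => gaussG_hasDerivAt x)
    (gaussQ_continuous.intervalIntegrable s t)).symm

lemma key1 {s : ℝ} (hs : 0 < s) : s * gaussQ s < ∫ u in (0:ℝ)..s, gaussQ u := by
  have hsub : (∫ u in (0:ℝ)..s, gaussQ u) - s * gaussQ s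
      = ∫ u in (0:ℝ)..s, (gaussQ u - gaussQ s) := by
    rw [intervalIntegral.integral_sub (gaussQ_continuous.intervalIntegrable 0 s)
      ((continuous_const (y := gaussQ s)).intervalIntegrable 0 s), intervalIntegral.integral_const]
    simp [smul_eq_mul]
  have hpos : 0 < ∫ u in (0:ℝ)..s, (gaussQ u - gaussQ s) :=
    intervalIntegral.intervalIntegral_pos_of_pos_on
      ((gaussQ_continuous.sub continuous_const).intervalIntegrable 0 s)
      (fun x hx => by have := gaussQ_strictAnti hx.2; linarith) hs
  linarith

lemma key2 {s t : ℝ} (hst : s ≤ t) :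
    (∫ u in s..t, gaussQ u) ≤ (t - s) * gaussQ s := by
  have h := intervalIntegral.integral_mono_on (μ := volume) hst
    (gaussQ_continuous.intervalIntegrable s t) ((continuous_const (y := gaussQ s)).intervalIntegrable s t)
    (fun x hx => (gaussQ_strictAnti.antitone hx.1 : gaussQ x ≤ gaussQ s))
  rwa [intervalIntegral.integral_const, smul_eq_mul] at h

/-- The function `ε₀(a) = [G(2√a) − G(0)]/√a` is strictly decreasing
for `a > 0`. -/
theorem eps0_strictAntiOn :
    StrictAntiOn (fun a : ℝ => (gaussG (2 * Real.sqrt a) - gaussG 0) / Real.sqrt a)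
      (Set.Ioi (0 : ℝ)) := by
  intro a ha b hb hab
  simp only [Set.mem_Ioi] at ha hb
  have hsa : 0 < Real.sqrt a := Real.sqrt_pos.2 ha
  have hsb : 0 < Real.sqrt b := Real.sqrt_pos.2 hb
  set s := 2 * Real.sqrt a with hs
  set t := 2 * Real.sqrt b with ht
  have hs0 : 0 < s := by positivity
  have hst : s < t := by
    have := Real.sqrt_lt_sqrt ha.le hab
    simp only [hs, ht]; linarith
  have hGs : gaussG s - gaussG 0 = ∫ u in (0:ℝ)..s, gaussQ u := gaussG_sub 0 s hs0.le
  have hGt : gaussG t - gaussG 0 = ∫ u in (0:ℝ)..t, gaussQ u := gaussG_sub 0 t (by linarith)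
  have hadd : (∫ u in (0:ℝ)..t, gaussQ u)
      = (∫ u in (0:ℝ)..s, gaussQ u) + ∫ u in s..t, gaussQ u :=
    (intervalIntegral.integral_add_adjacent_intervals
      (gaussQ_continuous.intervalIntegrable 0 s)
      (gaussQ_continuous.intervalIntegrable s t)).symm
  have h1 := key1 hs0
  have h2 := key2 hst.le
  rw [div_lt_div_iff₀ hsb hsa]
  rw [hGt, hGs, hadd]
  have hsa' : Real.sqrt a = s / 2 := by rw [hs]; ring
  have hsb' : Real.sqrt b = t / 2 := by rw [ht]; ring
  rw [hsa', hsb']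
  set I := ∫ u in (0:ℝ)..s, gaussQ u
  set J := ∫ u in s..t, gaussQ u
  have hQpos : 0 ≤ gaussQ s := by
    rw [gaussQ_eq]
    exact MeasureTheory.setIntegral_nonneg measurableSet_Ioi (fun x _ => (gphi_pos x).le)
  nlinarith [mul_le_mul_of_nonneg_left h2 hs0.le]
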